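/- Let A be the m×m HiPPO matrix with entries A_{n,k} = -√(2n+1)·√(2k+1) for n > k, A_{n,n} = -(n+1), and A_{n,k} = 0 for n < k (indices 1 ≤ n, k ≤ m), and let Δ > 0 satisfy Δ < 2/(m+1). Then every eigenvalue d of Ā = (I_m - (Δ/2)A)^{-1}(I_m + (Δ/2)A) satisfies 0 < d < 1; in particular the spectral radius of Ā is strictly less than 1. -/

import Mathlib

open scoped Matrix.Norms.L2Operator

open Matrix in
private lemma spec_aux {m : ℕ} {F : Type*} [Field F]
    (B C M : Matrix (Fin m) (Fin m) F)
    (hB : B.BlockTriangular OrderDual.toDual)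
    (hC : C.BlockTriangular OrderDual.toDual)
    (hBd : ∀ i, B i i ≠ 0) (hM : B * M = C) (z : F) :
    z ∈ spectrum F M ↔ ∃ i, z * B i i = C i i := by
  have hdetB : B.det = ∏ i, B i i := Matrix.det_of_lowerTriangular B hB
  have hdetB0 : B.det ≠ 0 := by
    rw [hdetB]; exact Finset.prod_ne_zero_iff.2 fun i _ => hBd i
  have hBu : IsUnit B := (Matrix.isUnit_iff_isUnit_det B).2 (isUnit_iff_ne_zero.2 hdetB0)
  have hT : (z • B - C).BlockTriangular OrderDual.toDual := by
    refine Matrix.BlockTriangular.sub (fun i j hij => ?_) hC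
    simp [hB hij]
  have hdetT : (z • B - C).det = ∏ i, (z * B i i - C i i) := by
    rw [Matrix.det_of_lowerTriangular _ hT]
    simp [Matrix.sub_apply]
  have key : B * (z • (1 : Matrix (Fin m) (Fin m) F) - M) = z • B - C := by
    rw [Matrix.mul_sub, Matrix.mul_smul, mul_one, hM]
  rw [spectrum.mem_iff, Algebra.algebraMap_eq_smul_one]
  constructor
  · intro h
    by_contra hc
    push_neg at hc
    apply h
    have hT0 : (z • B - C).det ≠ 0 := by
      rw [hdetT]
      exact Finset.prod_ne_zero_iff.2 fun i _ => sub_ne_zero.2 (hc i)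
    have h2 : IsUnit (B * (z • (1 : Matrix (Fin m) (Fin m) F) - M)) :=
      key ▸ (Matrix.isUnit_iff_isUnit_det _).2 (isUnit_iff_ne_zero.2 hT0)
    rw [Matrix.isUnit_iff_isUnit_det, Matrix.det_mul] at h2
    exact (Matrix.isUnit_iff_isUnit_det _).2 (isUnit_of_mul_isUnit_right h2)
  · rintro ⟨i, hi⟩ h
    have h2 : IsUnit (z • B - C) := key ▸ hBu.mul h
    rw [Matrix.isUnit_iff_isUnit_det, isUnit_iff_ne_zero, hdetT] at h2
    exact h2 (Finset.prod_eq_zero (Finset.mem_univ i) (by rw [hi, sub_self]))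

/-- Let `A` be the `m × m` HiPPO matrix (paper indices `1 ≤ n,k ≤ m`; here `i : Fin m`
corresponds to `n = i + 1`) and let `0 < Δ < 2/(m+1)`. Then every eigenvalue `d` of the
bilinear discretization `Ā = (I_m - (Δ/2)A)⁻¹ (I_m + (Δ/2)A)` satisfies `0 < d < 1`;
in particular the spectral radius of `Ā` is strictly less than `1`. -/
theorem hippo_bilinear_spectrum {m : ℕ} (A : Matrix (Fin m) (Fin m) ℝ)
    (hlow : ∀ i j : Fin m, (j : ℕ) < (i : ℕ) →
      A i j = -(Real.sqrt (2 * ((i : ℕ) : ℝ) + 3) * Real.sqrt (2 * ((j : ℕ) : ℝ) + 3)))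
    (hdiag : ∀ i : Fin m, A i i = -(((i : ℕ) : ℝ) + 2))
    (hupp : ∀ i j : Fin m, (i : ℕ) < (j : ℕ) → A i j = 0)
    (Δ : ℝ) (hΔ : 0 < Δ) (hΔ2 : Δ < 2 / ((m : ℝ) + 1))
    (Abar : Matrix (Fin m) (Fin m) ℝ)
    (hAbar : Abar = (1 - (Δ / 2) • A)⁻¹ * (1 + (Δ / 2) • A)) :
    (∀ d ∈ spectrum ℝ Abar, 0 < d ∧ d < 1) ∧
      spectralRadius ℂ (Abar.map (Complex.ofReal : ℝ → ℂ)) < 1 := by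
  classical
  set B : Matrix (Fin m) (Fin m) ℝ := 1 - (Δ / 2) • A with hBdef
  set C : Matrix (Fin m) (Fin m) ℝ := 1 + (Δ / 2) • A with hCdef
  have hAtri : A.BlockTriangular OrderDual.toDual := fun i j hij =>
    hupp i j (by exact_mod_cast (OrderDual.toDual_lt_toDual.mp hij))
  have hBtri : B.BlockTriangular OrderDual.toDual := fun i j hij => by
    have hij' : i < j := OrderDual.toDual_lt_toDual.mp hij
    simp [hBdef, Matrix.sub_apply, Matrix.one_apply_ne (ne_of_lt hij'), hAtri hij]
  have hCtri : C.BlockTriangular OrderDual.toDual := fun i j hij => by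
    have hij' : i < j := OrderDual.toDual_lt_toDual.mp hij
    simp [hCdef, Matrix.add_apply, Matrix.one_apply_ne (ne_of_lt hij'), hAtri hij]
  -- diagonal values
  have hBdiag : ∀ i : Fin m, B i i = 1 + Δ / 2 * (((i : ℕ) : ℝ) + 2) := fun i => by
    simp [hBdef, Matrix.sub_apply, hdiag i]; ring
  have hCdiag : ∀ i : Fin m, C i i = 1 - Δ / 2 * (((i : ℕ) : ℝ) + 2) := fun i => by
    simp [hCdef, Matrix.add_apply, hdiag i]; ring
  have hx : ∀ i : Fin m, 0 < Δ / 2 * (((i : ℕ) : ℝ) + 2) := fun i => by positivity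
  have hx1 : ∀ i : Fin m, Δ / 2 * (((i : ℕ) : ℝ) + 2) < 1 := by
    intro i
    have him : ((i : ℕ) : ℝ) + 2 ≤ (m : ℝ) + 1 := by
      have h1 : (i : ℕ) + 1 ≤ m := i.isLt
      have h2 := (Nat.cast_le (α := ℝ)).2 h1
      push_cast at h2; linarith
    have hm1 : (0 : ℝ) < (m : ℝ) + 1 := by positivity
    have hΔm : Δ * ((m : ℝ) + 1) < 2 := by
      rw [lt_div_iff₀ hm1] at hΔ2; linarith
    calc Δ / 2 * (((i : ℕ) : ℝ) + 2) ≤ Δ / 2 * ((m : ℝ) + 1) := by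
          apply mul_le_mul_of_nonneg_left him (by positivity)
      _ < 1 := by linarith
  have hBpos : ∀ i : Fin m, 0 < B i i := fun i => by
    rw [hBdiag i]; have := hx i; linarith
  have hBd : ∀ i : Fin m, B i i ≠ 0 := fun i => ne_of_gt (hBpos i)
  have hBunit : IsUnit B.det := by
    rw [Matrix.det_of_lowerTriangular B hBtri, isUnit_iff_ne_zero]
    exact Finset.prod_ne_zero_iff.2 fun i _ => hBd i
  haveI := Matrix.invertibleOfIsUnitDet B hBunit
  have hBM : B * Abar = C := by
    rw [hAbar, Matrix.mul_inv_cancel_left_of_invertible]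
  -- real spectrum characterization
  have hspecR : ∀ z : ℝ, z ∈ spectrum ℝ Abar ↔ ∃ i, z * B i i = C i i :=
    spec_aux B C Abar hBtri hCtri hBd hBM
  -- the eigenvalues lie in (0,1)
  have hval : ∀ (i : Fin m) (z : ℝ), z * B i i = C i i → 0 < z ∧ z ≤ (1 - Δ) / (1 + Δ) := by
    intro i z hz
    rw [hBdiag i, hCdiag i] at hz
    set x := Δ / 2 * (((i : ℕ) : ℝ) + 2) with hxdef
    have h0 : 0 < x := hx i
    have h1 : x < 1 := hx1 i
    have hzeq : z = (1 - x) / (1 + x) := by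
      rw [eq_div_iff (by linarith)]; linarith
    have hΔx : Δ ≤ x := by
      have h2 : (2 : ℝ) ≤ ((i : ℕ) : ℝ) + 2 := by
        have : (0 : ℝ) ≤ ((i : ℕ) : ℝ) := Nat.cast_nonneg _
        linarith
      calc Δ = Δ / 2 * 2 := by ring
        _ ≤ x := by
            rw [hxdef]
            exact mul_le_mul_of_nonneg_left h2 (by positivity)
    constructor
    · rw [hzeq]; apply div_pos <;> linarith
    · rw [hzeq, div_le_div_iff₀ (by linarith) (by linarith)]
      nlinarith
  have hΔ1lt : (1 - Δ) / (1 + Δ) < 1 := by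
    rw [div_lt_one (by linarith)]; linarith
  constructor
  · intro d hd
    obtain ⟨i, hi⟩ := (hspecR d).1 hd
    obtain ⟨h1, h2⟩ := hval i d hi
    exact ⟨h1, lt_of_le_of_lt h2 hΔ1lt⟩
  · -- complex part
    have hBM' : B.map (Complex.ofReal : ℝ → ℂ) * Abar.map Complex.ofReal
        = C.map Complex.ofReal := by
      rw [show (Complex.ofReal : ℝ → ℂ) = ⇑Complex.ofRealHom from rfl,
        ← Matrix.map_mul, hBM]
    have hBtri' : (B.map (Complex.ofReal : ℝ → ℂ)).BlockTriangular OrderDual.toDual :=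
      fun i j hij => by simp [Matrix.map_apply, hBtri hij]
    have hCtri' : (C.map (Complex.ofReal : ℝ → ℂ)).BlockTriangular OrderDual.toDual :=
      fun i j hij => by simp [Matrix.map_apply, hCtri hij]
    have hBd' : ∀ i, (B.map (Complex.ofReal : ℝ → ℂ)) i i ≠ 0 := fun i => by
      simp [Matrix.map_apply, hBd i]
    have hspecC := spec_aux _ _ _ hBtri' hCtri' hBd' hBM'
    have hbound : spectralRadius ℂ (Abar.map (Complex.ofReal : ℝ → ℂ))
        ≤ ENNReal.ofReal ((1 - Δ) / (1 + Δ)) := by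
      refine iSup₂_le fun z hz => ?_
      obtain ⟨i, hi⟩ := (hspecC z).1 hz
      have hzr : z = ((C i i / B i i : ℝ) : ℂ) := by
        have hB0 : ((B i i : ℝ) : ℂ) ≠ 0 := by exact_mod_cast hBd i
        push_cast
        rw [eq_div_iff hB0]
        simpa [Matrix.map_apply] using hi
      have hvr : 0 < C i i / B i i ∧ C i i / B i i ≤ (1 - Δ) / (1 + Δ) := by
        exact hval i _ (div_mul_cancel₀ _ (hBd i))
      rw [hzr, ← enorm_eq_nnnorm, ← ofReal_norm]
      apply ENNReal.ofReal_le_ofReal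
      rw [Complex.norm_real, Real.norm_eq_abs, abs_of_pos hvr.1]
      exact hvr.2
    refine lt_of_le_of_lt hbound ?_
    rw [ENNReal.ofReal_lt_one]
    exact hΔ1lt
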